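/- (Image of the degenerate direction, step S¹ = {g(u) : ‖u‖ = 1} in the proof of Theorem 5.) Assume the avoidance hypothesis. Then the set {g(u) : u ∈ ℝ², ‖u‖ ≤ 1 and c·u₁ + d·u₂ = 0} equals the singleton {0}, and moreover there exists u ∈ ℝ² with ‖u‖ = 1 and g(u) = 0; consequently {g(u) : ‖u‖ = 1 or (‖u‖ ≤ 1 and c·u₁ + d·u₂ = 0)} = {g(u) : ‖u‖ = 1}. -/

import Mathlib

noncomputable section

/-- Matrix–vector multiplication, viewed as a map on the Euclidean plane. -/
def mv (M : Matrix (Fin 2) (Fin 2) ℝ) (u : EuclideanSpace ℝ (Fin 2)) :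
    EuclideanSpace ℝ (Fin 2) := WithLp.toLp 2 (M.mulVec u)

/-- Range `r(p) = √((p₁−a)² + (p₂−b)²)` to the sensor located at `(a, b)`. -/
def rr (a b : ℝ) (p : EuclideanSpace ℝ (Fin 2)) : ℝ :=
  Real.sqrt ((p 0 - a) ^ 2 + (p 1 - b) ^ 2)

/-- Bearing `θ(p)`: polar angle in `(−π, π]` of the complex number `(p₁−a) + i(p₂−b)`. -/
def theta (a b : ℝ) (p : EuclideanSpace ℝ (Fin 2)) : ℝ :=
  Complex.arg ⟨p 0 - a, p 1 - b⟩

/-- Jacobian matrix of the range–bearing measurement map at `p`. -/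
def Jh (a b : ℝ) (p : EuclideanSpace ℝ (Fin 2)) : Matrix (Fin 2) (Fin 2) ℝ :=
  !![(p 0 - a) / rr a b p, (p 1 - b) / rr a b p;
     -(p 1 - b) / (rr a b p) ^ 2, (p 0 - a) / (rr a b p) ^ 2]

/-- The range–bearing measurement map `h(p) = (r(p), θ(p))`. -/
def hMeas (a b : ℝ) (p : EuclideanSpace ℝ (Fin 2)) : EuclideanSpace ℝ (Fin 2) :=
  WithLp.toLp 2 ![rr a b p, theta a b p]

/-- The linearization remainder `g(u) = h(x + Eu) − h(x) − J_h(x)·(Eu)`. -/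
def gRem (a b : ℝ) (x : EuclideanSpace ℝ (Fin 2)) (E : Matrix (Fin 2) (Fin 2) ℝ)
    (u : EuclideanSpace ℝ (Fin 2)) : EuclideanSpace ℝ (Fin 2) :=
  hMeas a b (x + mv E u) - hMeas a b x - mv (Jh a b x) (mv E u)

lemma not_radial_x (a b : ℝ) (x : EuclideanSpace ℝ (Fin 2)) (E : Matrix (Fin 2) (Fin 2) ℝ)
    (havoid : ∀ u : EuclideanSpace ℝ (Fin 2), ‖u‖ ≤ 1 →
      ¬((x + mv E u) 0 ≤ a ∧ (x + mv E u) 1 = b)) :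
    ¬(x 0 ≤ a ∧ x 1 = b) := by
  have h0 := havoid 0 (by simp)
  have hm : mv E (0 : EuclideanSpace ℝ (Fin 2)) = 0 := by simp [mv]
  rwa [hm, add_zero] at h0

/-- Key computation: on a degenerate direction inside the ball, the remainder vanishes. -/
lemma gRem_eq_zero (a b : ℝ) (x : EuclideanSpace ℝ (Fin 2)) (E : Matrix (Fin 2) (Fin 2) ℝ)
    (havoid : ∀ u : EuclideanSpace ℝ (Fin 2), ‖u‖ ≤ 1 →
      ¬((x + mv E u) 0 ≤ a ∧ (x + mv E u) 1 = b))
    (c d : ℝ)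
    (hc : c = E 0 0 * (x 1 - b) - E 1 0 * (x 0 - a))
    (hd : d = E 0 1 * (x 1 - b) - E 1 1 * (x 0 - a))
    (u : EuclideanSpace ℝ (Fin 2)) (hu : ‖u‖ ≤ 1)
    (hdeg : c * u 0 + d * u 1 = 0) :
    gRem a b x E u = 0 := by
  have hx := not_radial_x a b x E havoid
  set A0 := x 0 - a with hA0
  set A1 := x 1 - b with hA1
  have hv0 : mv E u 0 = E 0 0 * u 0 + E 0 1 * u 1 := by
    simp [mv, Matrix.mulVec, dotProduct, Fin.sum_univ_two]
  have hv1 : mv E u 1 = E 1 0 * u 0 + E 1 1 * u 1 := by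
    simp [mv, Matrix.mulVec, dotProduct, Fin.sum_univ_two]
  have hcross : mv E u 0 * A1 - mv E u 1 * A0 = 0 := by
    rw [hv0, hv1]
    subst hc hd
    linear_combination hdeg
  have hs : 0 < A0 ^ 2 + A1 ^ 2 := by
    by_contra h
    push_neg at h
    have h0 : A0 = 0 := by nlinarith [sq_nonneg A0, sq_nonneg A1]
    have h1 : A1 = 0 := by nlinarith [sq_nonneg A0, sq_nonneg A1]
    exact hx ⟨by linarith [hA0 ▸ h0], by linarith [hA1 ▸ h1]⟩
  obtain ⟨t, hv0', hv1'⟩ :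
      ∃ t : ℝ, mv E u 0 = t * A0 ∧ mv E u 1 = t * A1 := by
    refine ⟨(mv E u 0 * A0 + mv E u 1 * A1) / (A0 ^ 2 + A1 ^ 2), ?_, ?_⟩
    · field_simp [hs.ne']; linear_combination A1 * hcross
    · field_simp [hs.ne']; linear_combination (-A0) * hcross
  have ht : 0 < 1 + t := by
    by_contra hle
    push_neg at hle
    have ht1 : t ≤ -1 := by linarith
    have htneg : t < 0 := by linarith
    obtain ⟨μ, hμpos, hμ1, hμt⟩ : ∃ μ : ℝ, 0 < μ ∧ μ ≤ 1 ∧ μ * t = -1 := by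
      refine ⟨-1 / t, ?_, ?_, ?_⟩
      · exact div_pos_iff.mpr (Or.inr ⟨by norm_num, htneg⟩)
      · have h2 : (1 : ℝ) ≤ -t := by linarith
        have h3 : -1 / t = 1 / (-t) := by rw [neg_div, div_neg]
        rw [h3]
        exact div_le_one_of_le₀ h2 (by linarith)
      · exact div_mul_cancel₀ (-1) (ne_of_lt htneg)
    have hn : ‖μ • u‖ ≤ 1 := by
      rw [norm_smul, Real.norm_eq_abs, abs_of_pos hμpos]
      calc μ * ‖u‖ ≤ 1 * 1 := mul_le_mul hμ1 hu (norm_nonneg u) (by norm_num)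
        _ = 1 := by norm_num
    have hEμ : mv E (μ • u) = μ • mv E u := by simp only [mv, WithLp.ofLp_smul, Matrix.mulVec_smul, WithLp.toLp_smul]
    apply havoid (μ • u) hn
    have e0 : (x + mv E (μ • u)) 0 = x 0 + μ * mv E u 0 := by rw [hEμ]; rfl
    have e1 : (x + mv E (μ • u)) 1 = x 1 + μ * mv E u 1 := by rw [hEμ]; rfl
    constructor
    · rw [e0, hv0']
      have heq : x 0 + μ * (t * A0) = a := by
        rw [hA0]; linear_combination (x 0 - a) * hμt
      linarith [heq]
    · rw [e1, hv1', hA1]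
      linear_combination (x 1 - b) * hμt
  set r := Real.sqrt (A0 ^ 2 + A1 ^ 2) with hrdef
  have hr : 0 < r := Real.sqrt_pos.mpr hs
  have hrx : rr a b x = r := by
    show Real.sqrt ((x 0 - a) ^ 2 + (x 1 - b) ^ 2) = r
    rw [← hA0, ← hA1]
  have hr2 : r ^ 2 = A0 ^ 2 + A1 ^ 2 := Real.sq_sqrt (le_of_lt hs)
  have hp0 : (x + mv E u) 0 - a = (1 + t) * A0 := by
    have e : (x + mv E u) 0 = x 0 + mv E u 0 := rfl
    rw [e, hv0', hA0]; ring
  have hp1 : (x + mv E u) 1 - b = (1 + t) * A1 := by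
    have e : (x + mv E u) 1 = x 1 + mv E u 1 := rfl
    rw [e, hv1', hA1]; ring
  have hrr : rr a b (x + mv E u) = (1 + t) * r := by
    show Real.sqrt (((x + mv E u) 0 - a) ^ 2 + ((x + mv E u) 1 - b) ^ 2) = (1 + t) * r
    rw [hp0, hp1,
      show ((1 + t) * A0) ^ 2 + ((1 + t) * A1) ^ 2 = (1 + t) ^ 2 * (A0 ^ 2 + A1 ^ 2) from by ring,
      Real.sqrt_mul (sq_nonneg _), Real.sqrt_sq (le_of_lt ht)]
  have hth : theta a b (x + mv E u) = theta a b x := by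
    show Complex.arg ⟨(x + mv E u) 0 - a, (x + mv E u) 1 - b⟩ =
      Complex.arg ⟨x 0 - a, x 1 - b⟩
    rw [hp0, hp1, ← hA0, ← hA1]
    have hz : (⟨(1 + t) * A0, (1 + t) * A1⟩ : ℂ) = ((1 + t : ℝ) : ℂ) * ⟨A0, A1⟩ := by
      apply Complex.ext <;> simp
    rw [hz]
    exact Complex.arg_real_mul _ ht
  have e00 : Jh a b x 0 0 = A0 / r := by
    show (x 0 - a) / rr a b x = A0 / r
    rw [hrx, ← hA0]
  have e01 : Jh a b x 0 1 = A1 / r := by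
    show (x 1 - b) / rr a b x = A1 / r
    rw [hrx, ← hA1]
  have e10 : Jh a b x 1 0 = -A1 / r ^ 2 := by
    show -(x 1 - b) / (rr a b x) ^ 2 = -A1 / r ^ 2
    rw [hrx, ← hA1]
  have e11 : Jh a b x 1 1 = A0 / r ^ 2 := by
    show (x 0 - a) / (rr a b x) ^ 2 = A0 / r ^ 2
    rw [hrx, ← hA0]
  have hJa : mv (Jh a b x) (mv E u) 0 = t * r := by
    have e : mv (Jh a b x) (mv E u) 0 = Jh a b x 0 0 * mv E u 0 + Jh a b x 0 1 * mv E u 1 := by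
      simp [mv, Matrix.mulVec, dotProduct, Fin.sum_univ_two]
    rw [e, e00, e01, hv0', hv1', div_mul_eq_mul_div, div_mul_eq_mul_div,
      ← add_div, div_eq_iff hr.ne']
    linear_combination (-t) * hr2
  have hJb : mv (Jh a b x) (mv E u) 1 = 0 := by
    have e : mv (Jh a b x) (mv E u) 1 = Jh a b x 1 0 * mv E u 0 + Jh a b x 1 1 * mv E u 1 := by
      simp [mv, Matrix.mulVec, dotProduct, Fin.sum_univ_two]
    rw [e, e10, e11, hv0', hv1', div_mul_eq_mul_div, div_mul_eq_mul_div,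
      ← add_div, div_eq_iff (pow_ne_zero 2 hr.ne')]
    ring
  ext i
  fin_cases i
  · show rr a b (x + mv E u) - rr a b x - mv (Jh a b x) (mv E u) 0 = 0
    rw [hrr, hrx, hJa]; ring
  · show theta a b (x + mv E u) - theta a b x - mv (Jh a b x) (mv E u) 1 = 0
    rw [hth, hJb]; ring

/-- **Image of the degenerate direction.** Under the avoidance hypothesis, the image of the
degenerate directions is the singleton `{0}`, the value `0` is also attained on the unit
sphere, and hence `S¹ = {g(u) : ‖u‖ = 1}`. -/
theorem degenerate_image_eq_singleton_zero
    (a b : ℝ) (x : EuclideanSpace ℝ (Fin 2)) (E : Matrix (Fin 2) (Fin 2) ℝ)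
    (hE : 0 < E.det)
    (havoid : ∀ u : EuclideanSpace ℝ (Fin 2), ‖u‖ ≤ 1 →
      ¬((x + mv E u) 0 ≤ a ∧ (x + mv E u) 1 = b))
    (c d : ℝ)
    (hc : c = E 0 0 * (x 1 - b) - E 1 0 * (x 0 - a))
    (hd : d = E 0 1 * (x 1 - b) - E 1 1 * (x 0 - a)) :
    {y : EuclideanSpace ℝ (Fin 2) | ∃ u : EuclideanSpace ℝ (Fin 2),
        (‖u‖ ≤ 1 ∧ c * u 0 + d * u 1 = 0) ∧ gRem a b x E u = y} = {0} ∧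
      (∃ u : EuclideanSpace ℝ (Fin 2), ‖u‖ = 1 ∧ gRem a b x E u = 0) ∧
      {y : EuclideanSpace ℝ (Fin 2) | ∃ u : EuclideanSpace ℝ (Fin 2),
          (‖u‖ = 1 ∨ (‖u‖ ≤ 1 ∧ c * u 0 + d * u 1 = 0)) ∧ gRem a b x E u = y} =
        {y : EuclideanSpace ℝ (Fin 2) | ∃ u : EuclideanSpace ℝ (Fin 2),
          ‖u‖ = 1 ∧ gRem a b x E u = y} := by
  have key := gRem_eq_zero a b x E havoid c d hc hd
  have hx := not_radial_x a b x E havoid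
  have hcd2 : 0 < c ^ 2 + d ^ 2 := by
    have hcd : ¬(c = 0 ∧ d = 0) := by
      rintro ⟨h0, h1⟩
      rw [hc] at h0
      rw [hd] at h1
      have hdet : E.det = E 0 0 * E 1 1 - E 0 1 * E 1 0 := by
        simp [Matrix.det_fin_two]
      have hX1 : (x 1 - b) * E.det = 0 := by
        rw [hdet]; linear_combination E 1 1 * h0 - E 1 0 * h1
      have hX0 : (x 0 - a) * E.det = 0 := by
        rw [hdet]; linear_combination E 0 1 * h0 - E 0 0 * h1
      have hb : x 1 = b := by
        rcases mul_eq_zero.mp hX1 with h | h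
        · linarith
        · exact absurd h (ne_of_gt hE)
      have ha : x 0 = a := by
        rcases mul_eq_zero.mp hX0 with h | h
        · linarith
        · exact absurd h (ne_of_gt hE)
      exact hx ⟨le_of_eq ha, hb⟩
    rcases not_and_or.mp hcd with h | h
    · rcases (Ne.lt_or_gt h) with h' | h' <;> nlinarith [sq_nonneg d]
    · rcases (Ne.lt_or_gt h) with h' | h' <;> nlinarith [sq_nonneg c]
  obtain ⟨n, hnpos, hn2⟩ : ∃ n : ℝ, 0 < n ∧ n ^ 2 = c ^ 2 + d ^ 2 :=
    ⟨Real.sqrt (c ^ 2 + d ^ 2), Real.sqrt_pos.mpr hcd2, Real.sq_sqrt (le_of_lt hcd2)⟩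
  set u1 : EuclideanSpace ℝ (Fin 2) := WithLp.toLp 2 ![d / n, -c / n] with hu1def
  have hu1n : ‖u1‖ = 1 := by
    rw [EuclideanSpace.norm_eq]
    have e0 : u1 0 = d / n := rfl
    have e1 : u1 1 = -c / n := rfl
    rw [Fin.sum_univ_two, e0, e1]
    simp only [Real.norm_eq_abs]
    rw [show |d / n| ^ 2 + |-c / n| ^ 2 = (c ^ 2 + d ^ 2) / n ^ 2 from by
      rw [sq_abs, sq_abs]; field_simp [hnpos.ne']; ring]
    rw [← hn2, div_self (by positivity), Real.sqrt_one]
  have hdeg1 : c * u1 0 + d * u1 1 = 0 := by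
    show c * (d / n) + d * (-c / n) = 0
    ring
  have hg1 : gRem a b x E u1 = 0 := key u1 (le_of_eq hu1n) hdeg1
  refine ⟨?_, ⟨u1, hu1n, hg1⟩, ?_⟩
  · ext y
    simp only [Set.mem_setOf_eq, Set.mem_singleton_iff]
    constructor
    · rintro ⟨u, ⟨h1, h2⟩, rfl⟩
      exact key u h1 h2
    · rintro rfl
      refine ⟨0, ⟨by simp, ?_⟩, ?_⟩
      · show c * (0 : ℝ) + d * (0 : ℝ) = 0
        ring
      · exact key 0 (by simp) (by show c * (0 : ℝ) + d * (0 : ℝ) = 0; ring)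
  · ext y
    simp only [Set.mem_setOf_eq]
    constructor
    · rintro ⟨u, h | ⟨h1, h2⟩, rfl⟩
      · exact ⟨u, h, rfl⟩
      · refine ⟨u1, hu1n, ?_⟩
        rw [hg1, key u h1 h2]
    · rintro ⟨u, h, rfl⟩
      exact ⟨u, Or.inl h, rfl⟩
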